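/- If f is a budget-balanced distribution rule for a welfare function W (with W(∅) = 0) on a finite player set N that guarantees the existence of a pure Nash equilibrium in all games in G(N, f, W), then for every S ⊆ N and every i ∈ N^W(S), f(i, S) = f(i, N^W(S)). -/

import Mathlib

open scoped BigOperators Classical

namespace CostSharing

/-- A welfare sharing game on player set `N`: a finite resource set, a nonempty
finite action set (a collection of subsets of resources) for each player, and a
local welfare function at each resource. -/
structure Game (N : Type) [Fintype N] [DecidableEq N] where
  R : Type
  [finR : Fintype R]
  [decR : DecidableEq R]
  act : N → Finset (Finset R)
  act_nonempty : ∀ i, (act i).Nonempty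
  Wr : R → Finset N → ℝ

attribute [instance] Game.finR Game.decR

variable {N : Type} [Fintype N] [DecidableEq N]

/-- `{a}_r`: the set of players choosing resource `r` in profile `a`. -/
def playersAt {G : Game N} (a : N → Finset G.R) (r : G.R) : Finset N :=
  Finset.univ.filter fun i => r ∈ a i

/-- Player `i`'s utility, where `fD` assigns to each local welfare function its
local distribution rule (so resources with identical welfare functions have
identical distribution rules). -/
noncomputable def utility (G : Game N) (fD : (Finset N → ℝ) → N → Finset N → ℝ)
    (a : N → Finset G.R) (i : N) : ℝ :=
  ∑ r ∈ a i, fD (G.Wr r) i (playersAt a r)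

/-- Pure Nash equilibrium. -/
def IsPNE (G : Game N) (fD : (Finset N → ℝ) → N → Finset N → ℝ)
    (a : N → Finset G.R) : Prop :=
  (∀ i, a i ∈ G.act i) ∧
    ∀ i : N, ∀ b ∈ G.act i,
      utility G fD (Function.update a i b) i ≤ utility G fD a i

/-- Every game in the class `G(N, f^𝕎, 𝕎)` possesses a pure Nash equilibrium. -/
def GuaranteesPNE (𝕎 : Set (Finset N → ℝ))
    (fD : (Finset N → ℝ) → N → Finset N → ℝ) : Prop :=
  ∀ G : Game N, (∀ r : G.R, G.Wr r ∈ 𝕎) → ∃ a, IsPNE G fD a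

/-- Every game in the single-welfare-function class `G(N, f, W)` possesses a
pure Nash equilibrium. -/
def GuaranteesPNE1 (W : Finset N → ℝ) (f : N → Finset N → ℝ) : Prop :=
  ∀ G : Game N, (∀ r : G.R, G.Wr r = W) → ∃ a, IsPNE G (fun _ => f) a

/-- A distribution rule allocates nothing to absent players. -/
def DistRule (f : N → Finset N → ℝ) : Prop :=
  ∀ (i : N) (S : Finset N), i ∉ S → f i S = 0

/-- Budget balance: `∑_{i∈S} f(i,S) = W(S)`. -/
def BudgetBalanced (W : Finset N → ℝ) (f : N → Finset N → ℝ) : Prop :=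
  ∀ S : Finset N, ∑ i ∈ S, f i S = W S

/-- The inclusion (unanimity) welfare function `W^T`. -/
def unanimity (T S : Finset N) : ℝ := if T ⊆ S then 1 else 0

/-- The basis coefficient `q^W_T` of `W` on the unanimity basis (Möbius inversion). -/
def coeff (W : Finset N → ℝ) (T : Finset N) : ℝ :=
  ∑ R ∈ T.powerset, (-1 : ℝ) ^ (T.card - R.card) * W R

/-- The support `𝒯^W` of the basis representation of `W`. -/
noncomputable def supp (W : Finset N → ℝ) : Finset (Finset N) :=
  Finset.univ.filter fun T => coeff W T ≠ 0

/-- `𝒯^W(S)`: the contributing coalitions within `S`. -/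
noncomputable def suppIn (W : Finset N → ℝ) (S : Finset N) : Finset (Finset N) :=
  (supp W).filter (· ⊆ S)

/-- `N^W(S)`: the contributing players within `S`. -/
noncomputable def contributors (W : Finset N → ℝ) (S : Finset N) : Finset N :=
  (suppIn W S).biUnion id

/-- A weight system `ω = (λ, Σ)`: strictly positive player weights together with
an ordered partition of `N`. -/
structure WeightSystem (N : Type) [Fintype N] [DecidableEq N] where
  lam : N → ℝ
  lam_pos : ∀ i, 0 < lam i
  m : ℕ
  part : Fin m → Finset N
  part_nonempty : ∀ k, (part k).Nonempty
  part_disjoint : ∀ k l, k ≠ l → Disjoint (part k) (part l)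
  part_covers : ∀ i : N, ∃ k, i ∈ part k

/-- The index of the block of the ordered partition containing player `i`. -/
noncomputable def WeightSystem.idx (ω : WeightSystem N) (i : N) : Fin ω.m :=
  (ω.part_covers i).choose

/-- `T̄ = T ∩ S_k` where `k = min {j : S_j ∩ T ≠ ∅}`. -/
noncomputable def WeightSystem.bar (ω : WeightSystem N) (T : Finset N) : Finset N :=
  T.filter fun i => ∀ j ∈ T, ω.idx i ≤ ω.idx j

/-- The generalized weighted Shapley value basis rule `f^T_{GWSV}[ω]`. -/
noncomputable def fGWSVbasis (ω : WeightSystem N) (T : Finset N) (i : N)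
    (S : Finset N) : ℝ :=
  if i ∈ ω.bar T ∧ T ⊆ S then ω.lam i / ∑ j ∈ ω.bar T, ω.lam j else 0

/-- The generalized weighted marginal contribution basis rule `f^T_{GWMC}[ω]`. -/
noncomputable def fGWMCbasis (ω : WeightSystem N) (T : Finset N) (i : N)
    (S : Finset N) : ℝ :=
  if i ∈ ω.bar T ∧ T ⊆ S then ω.lam i else 0

/-- The generalized weighted Shapley value distribution rule `f^{W'}_{GWSV}[ω]`. -/
noncomputable def fGWSV (ω : WeightSystem N) (W' : Finset N → ℝ) (i : N)
    (S : Finset N) : ℝ :=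
  ∑ T ∈ supp W', coeff W' T * fGWSVbasis ω T i S

/-- The generalized weighted marginal contribution distribution rule
`f^{W''}_{GWMC}[ω]`. -/
noncomputable def fGWMC (ω : WeightSystem N) (W'' : Finset N → ℝ) (i : N)
    (S : Finset N) : ℝ :=
  ∑ T ∈ supp W'', coeff W'' T * fGWMCbasis ω T i S

/-- The recursively defined basis distribution rules `f^T` of a distribution
rule `f` for `W` (recursion along the min-partition of `(𝒯^W, ⊆)`). -/
noncomputable def basisRule (W : Finset N → ℝ) (f : N → Finset N → ℝ)
    (T : Finset N) (i : N) (S : Finset N) : ℝ :=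
  if T ⊆ S then
    (1 / coeff W T) *
      (f i T - ∑ T' ∈ ((suppIn W T).erase T).attach,
        coeff W T'.1 * basisRule W f T'.1 i S)
  else 0
termination_by T.card
decreasing_by
  have h := T'.2
  simp only [Finset.mem_erase, suppIn, Finset.mem_filter] at h
  exact Finset.card_lt_card (Finset.ssubset_iff_subset_ne.mpr ⟨h.2.2, h.1⟩)


-- ==================== auxiliary development ====================

lemma sum_coeff_powerset (W : Finset N → ℝ) (X : Finset N) :
    ∑ T ∈ X.powerset, coeff W T = W X := by
  unfold coeff
  rw [Finset.sum_comm' (s := X.powerset) (t := fun T => T.powerset)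
    (t' := X.powerset) (s' := fun R => X.powerset.filter fun T => R ⊆ T)
    (by
      intro T R
      simp only [Finset.mem_powerset, Finset.mem_filter]
      constructor
      · rintro ⟨h1, h2⟩; exact ⟨⟨h1, h2⟩, h2.trans h1⟩
      · rintro ⟨⟨h1, h2⟩, _⟩; exact ⟨h1, h2⟩)]
  have hinner : ∀ R ∈ X.powerset,
      ∑ T ∈ X.powerset.filter (fun T => R ⊆ T), (-1 : ℝ) ^ (T.card - R.card) * W R
        = (if R = X then W R else 0) := by
    intro R hR
    rw [← Finset.sum_mul]
    have hb : ∑ T ∈ X.powerset.filter (fun T => R ⊆ T), (-1 : ℝ) ^ (T.card - R.card)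
        = ∑ U ∈ (X \ R).powerset, (-1 : ℝ) ^ U.card := by
      refine Finset.sum_nbij' (fun T => T \ R) (fun U => U ∪ R) ?_ ?_ ?_ ?_ ?_
      · intro T hT
        simp only [Finset.mem_filter, Finset.mem_powerset] at hT ⊢
        exact Finset.sdiff_subset_sdiff hT.1 (le_refl R)
      · intro U hU
        simp only [Finset.mem_filter, Finset.mem_powerset] at hU ⊢
        rw [Finset.mem_powerset] at hR
        constructor
        · exact Finset.union_subset (hU.trans (Finset.sdiff_subset)) hR
        · exact Finset.subset_union_right
      · intro T hT
        simp only [Finset.mem_filter, Finset.mem_powerset] at hT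
        exact Finset.sdiff_union_of_subset hT.2
      · intro U hU
        simp only [Finset.mem_powerset] at hU
        have hdisj : Disjoint U R := Finset.disjoint_of_subset_left hU Finset.sdiff_disjoint
        ext k
        simp only [Finset.mem_sdiff, Finset.mem_union]
        constructor
        · rintro ⟨h | h, hk⟩
          · exact h
          · exact absurd h hk
        · intro hk
          exact ⟨Or.inl hk, fun hc => (Finset.disjoint_left.1 hdisj) hk hc⟩
      · intro T hT
        simp only [Finset.mem_filter, Finset.mem_powerset] at hT
        rw [Finset.card_sdiff_of_subset hT.2]
    rw [hb]
    have hz : ∑ U ∈ (X \ R).powerset, (-1 : ℝ) ^ U.card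
        = ((∑ U ∈ (X \ R).powerset, (-1 : ℤ) ^ U.card : ℤ) : ℝ) := by
      push_cast; rfl
    rw [hz, Finset.sum_powerset_neg_one_pow_card]
    rw [Finset.mem_powerset] at hR
    by_cases hRX : R = X
    · rw [if_pos hRX, if_pos (by rw [hRX, Finset.sdiff_self]), Int.cast_one, one_mul]
    · rw [if_neg hRX, if_neg (by
        intro hcon
        exact hRX (le_antisymm hR (Finset.sdiff_eq_empty_iff_subset.mp hcon))),
        Int.cast_zero, zero_mul]
  rw [Finset.sum_congr rfl hinner, Finset.sum_ite_eq' X.powerset X W,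
    if_pos (Finset.mem_powerset_self X)]

lemma sum_coeff_suppIn (W : Finset N → ℝ) (X : Finset N) :
    ∑ T ∈ suppIn W X, coeff W T = W X := by
  rw [← sum_coeff_powerset W X]
  apply Finset.sum_subset
  · intro T hT
    simp only [suppIn, supp, Finset.mem_filter, Finset.mem_univ, true_and] at hT
    exact Finset.mem_powerset.2 hT.2
  · intro T hT hT'
    by_contra h
    refine hT' ?_
    simp only [suppIn, supp, Finset.mem_filter, Finset.mem_univ, true_and]
    exact ⟨h, Finset.mem_powerset.1 hT⟩

lemma mem_contributors {W : Finset N → ℝ} {S : Finset N} {i : N} :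
    i ∈ contributors W S ↔ ∃ T, T ∈ supp W ∧ T ⊆ S ∧ i ∈ T := by
  simp only [contributors, suppIn, Finset.mem_biUnion, Finset.mem_filter, id]
  constructor
  · rintro ⟨T, ⟨h1, h2⟩, h3⟩; exact ⟨T, h1, h2, h3⟩
  · rintro ⟨T, h1, h2, h3⟩; exact ⟨T, ⟨h1, h2⟩, h3⟩

lemma contributors_subset (W : Finset N → ℝ) (S : Finset N) :
    contributors W S ⊆ S := by
  intro i hi
  obtain ⟨T, _, hTS, hiT⟩ := mem_contributors.1 hi
  exact hTS hiT

lemma subset_contributors {W : Finset N → ℝ} {T S : Finset N}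
    (hT : T ∈ supp W) (hTS : T ⊆ S) : T ⊆ contributors W S :=
  fun i hi => mem_contributors.2 ⟨T, hT, hTS, hi⟩

-- set identities
lemma erase2_union₁ {A : Finset N} {i1 i2 : N} (h1 : i1 ∈ A) (h2 : i2 ∈ A) :
    (((A.erase i1).erase i2 ∪ {i1}) ∪ {i2}) = A := by
  ext k
  simp only [Finset.mem_union, Finset.mem_erase, Finset.mem_singleton]
  constructor
  · rintro ((⟨hk2, hk1, hk⟩ | rfl) | rfl) <;> assumption
  · intro hk
    by_cases hka : k = i1
    · exact Or.inl (Or.inr hka)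
    by_cases hkb : k = i2
    · exact Or.inr hkb
    · exact Or.inl (Or.inl ⟨hkb, hka, hk⟩)

lemma erase2_union₂ {A : Finset N} {i1 i2 : N} (h1 : i1 ∈ A) (hne : i1 ≠ i2) :
    ((A.erase i1).erase i2 ∪ {i1}) = A.erase i2 := by
  ext k
  simp only [Finset.mem_union, Finset.mem_erase, Finset.mem_singleton]
  constructor
  · rintro (⟨hk2, hk1, hk⟩ | rfl)
    · exact ⟨hk2, hk⟩
    · exact ⟨hne, h1⟩
  · rintro ⟨hk2, hk⟩
    by_cases hka : k = i1
    · exact Or.inr hka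
    · exact Or.inl ⟨hk2, hka, hk⟩

lemma erase2_union₃ {A : Finset N} {i1 i2 : N} (h2 : i2 ∈ A) (hne : i1 ≠ i2) :
    ((A.erase i1).erase i2 ∪ {i2}) = A.erase i1 := by
  ext k
  simp only [Finset.mem_union, Finset.mem_erase, Finset.mem_singleton]
  constructor
  · rintro (⟨hk2, hk1, hk⟩ | rfl)
    · exact ⟨hk1, hk⟩
    · exact ⟨Ne.symm hne, h2⟩
  · rintro ⟨hk1, hk⟩
    by_cases hkb : k = i2
    · exact Or.inr hkb
    · exact Or.inl ⟨hkb, hk1, hk⟩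

-- the game gadget
noncomputable def occ {n : ℕ} (Fix : Fin n → Finset N) (x y : N)
    (Bx By : Finset (Fin n)) (r : Fin n) : Finset N :=
  (Fix r ∪ (if r ∈ Bx then {x} else ∅)) ∪ (if r ∈ By then {y} else ∅)

@[reducible] noncomputable def gameOf (W : Finset N → ℝ) {n : ℕ} (Fix : Fin n → Finset N)
    (x y : N) (Ax Ay : Bool → Finset (Fin n)) : Game N where
  R := Fin n
  act i := if i = x then {Ax false, Ax true} else if i = y then {Ay false, Ay true}
    else {Finset.univ.filter fun r => i ∈ Fix r}
  act_nonempty i := by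
    split_ifs
    · exact Finset.insert_nonempty _ _
    · exact Finset.insert_nonempty _ _
    · exact Finset.singleton_nonempty _
  Wr _ := W

lemma master (W : Finset N → ℝ) (f : N → Finset N → ℝ) (hPNE : GuaranteesPNE1 W f)
    {n : ℕ} (Fix : Fin n → Finset N) (x y : N) (hxy : x ≠ y)
    (hFx : ∀ r, x ∉ Fix r) (hFy : ∀ r, y ∉ Fix r)
    (Ax Ay : Bool → Finset (Fin n))
    (hcyc : ∀ s t : Bool,
      (∑ r ∈ Ax s, f x (occ Fix x y (Ax s) (Ay t) r) <
        ∑ r ∈ Ax (!s), f x (occ Fix x y (Ax (!s)) (Ay t) r)) ∨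
      (∑ r ∈ Ay t, f y (occ Fix x y (Ax s) (Ay t) r) <
        ∑ r ∈ Ay (!t), f y (occ Fix x y (Ax s) (Ay (!t)) r))) : False := by
  obtain ⟨a, hact, hstab⟩ := hPNE (gameOf W Fix x y Ax Ay) (fun _ => rfl)
  have haxmem : a x ∈ ({Ax false, Ax true} : Finset (Finset (Fin n))) := by
    have h := hact x
    simpa only [gameOf, if_pos rfl, ↓reduceIte] using h
  have haymem : a y ∈ ({Ay false, Ay true} : Finset (Finset (Fin n))) := by
    have h := hact y
    simpa only [gameOf, if_neg (Ne.symm hxy), if_pos rfl, ↓reduceIte] using h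
  obtain ⟨s, hs⟩ : ∃ s, a x = Ax s := by
    rcases Finset.mem_insert.1 haxmem with h | h
    exacts [⟨false, h⟩, ⟨true, Finset.mem_singleton.1 h⟩]
  obtain ⟨t, ht⟩ : ∃ t, a y = Ay t := by
    rcases Finset.mem_insert.1 haymem with h | h
    exacts [⟨false, h⟩, ⟨true, Finset.mem_singleton.1 h⟩]
  have hfix : ∀ i, i ≠ x → i ≠ y → a i = Finset.univ.filter fun r => i ∈ Fix r := by
    intro i h1 h2
    have h := hact i
    simp only [gameOf, if_neg h1, if_neg h2, Finset.mem_singleton] at h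
    exact h
  have hplay : ∀ (b : N → Finset (Fin n)),
      (∀ i, i ≠ x → i ≠ y → b i = Finset.univ.filter fun r => i ∈ Fix r) →
      ∀ r : Fin n, playersAt (G := gameOf W Fix x y Ax Ay) b r = occ Fix x y (b x) (b y) r := by
    intro b hb r
    ext i
    simp only [playersAt, occ, Finset.mem_filter, Finset.mem_univ, true_and,
      Finset.mem_union]
    by_cases h1 : i = x
    · subst h1
      constructor
      · intro hr
        refine Or.inl (Or.inr ?_)
        rw [if_pos hr]; exact Finset.mem_singleton_self i
      · rintro ((h | h) | h)
        · exact absurd h (hFx r)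
        · by_cases hr : r ∈ b i
          · exact hr
          · rw [if_neg hr] at h; exact absurd h (Finset.notMem_empty i)
        · by_cases hr : r ∈ b y
          · rw [if_pos hr] at h; exact absurd (Finset.mem_singleton.1 h) hxy
          · rw [if_neg hr] at h; exact absurd h (Finset.notMem_empty i)
    · by_cases h2 : i = y
      · subst h2
        constructor
        · intro hr
          refine Or.inr ?_
          rw [if_pos hr]; exact Finset.mem_singleton_self i
        · rintro ((h | h) | h)
          · exact absurd h (hFy r)
          · by_cases hr : r ∈ b x
            · rw [if_pos hr] at h
              exact absurd (Finset.mem_singleton.1 h) (Ne.symm hxy)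
            · rw [if_neg hr] at h; exact absurd h (Finset.notMem_empty i)
          · by_cases hr : r ∈ b i
            · exact hr
            · rw [if_neg hr] at h; exact absurd h (Finset.notMem_empty i)
      · rw [hb i h1 h2]
        simp only [Finset.mem_filter, Finset.mem_univ, true_and]
        constructor
        · intro h; exact Or.inl (Or.inl h)
        · rintro ((h | h) | h)
          · exact h
          · by_cases hr : r ∈ b x
            · rw [if_pos hr] at h; exact absurd (Finset.mem_singleton.1 h) h1
            · rw [if_neg hr] at h; exact absurd h (Finset.notMem_empty i)
          · by_cases hr : r ∈ b y
            · rw [if_pos hr] at h; exact absurd (Finset.mem_singleton.1 h) h2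
            · rw [if_neg hr] at h; exact absurd h (Finset.notMem_empty i)
  have hux : utility (gameOf W Fix x y Ax Ay) (fun _ => f) a x
      = ∑ r ∈ Ax s, f x (occ Fix x y (Ax s) (Ay t) r) := by
    show (∑ r ∈ a x, f x (playersAt (G := gameOf W Fix x y Ax Ay) a r)) = _
    rw [Finset.sum_congr rfl fun r _ => by rw [hplay a hfix r]]
    rw [hs, ht]
  have huy : utility (gameOf W Fix x y Ax Ay) (fun _ => f) a y
      = ∑ r ∈ Ay t, f y (occ Fix x y (Ax s) (Ay t) r) := by
    show (∑ r ∈ a y, f y (playersAt (G := gameOf W Fix x y Ax Ay) a r)) = _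
    rw [Finset.sum_congr rfl fun r _ => by rw [hplay a hfix r]]
    rw [hs, ht]
  have hdevx : utility (gameOf W Fix x y Ax Ay) (fun _ => f)
      (Function.update a x (Ax (!s))) x
      = ∑ r ∈ Ax (!s), f x (occ Fix x y (Ax (!s)) (Ay t) r) := by
    have hupd : ∀ i, i ≠ x → i ≠ y →
        Function.update a x (Ax (!s)) i = Finset.univ.filter fun r => i ∈ Fix r := by
      intro i hi1 hi2
      rw [Function.update_of_ne hi1]
      exact hfix i hi1 hi2
    show (∑ r ∈ Function.update a x (Ax (!s)) x,
      f x (playersAt (G := gameOf W Fix x y Ax Ay) (Function.update a x (Ax (!s))) r)) = _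
    rw [Finset.sum_congr rfl fun r _ => by rw [hplay _ hupd r]]
    rw [Function.update_self, Function.update_of_ne (Ne.symm hxy), ht]
  have hdevy : utility (gameOf W Fix x y Ax Ay) (fun _ => f)
      (Function.update a y (Ay (!t))) y
      = ∑ r ∈ Ay (!t), f y (occ Fix x y (Ax s) (Ay (!t)) r) := by
    have hupd : ∀ i, i ≠ x → i ≠ y →
        Function.update a y (Ay (!t)) i = Finset.univ.filter fun r => i ∈ Fix r := by
      intro i hi1 hi2
      rw [Function.update_of_ne hi2]
      exact hfix i hi1 hi2
    show (∑ r ∈ Function.update a y (Ay (!t)) y,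
      f y (playersAt (G := gameOf W Fix x y Ax Ay) (Function.update a y (Ay (!t))) r)) = _
    rw [Finset.sum_congr rfl fun r _ => by rw [hplay _ hupd r]]
    rw [Function.update_self, Function.update_of_ne hxy, hs]
  have hmemx : Ax (!s) ∈ (gameOf W Fix x y Ax Ay).act x := by
    simp only [gameOf, if_pos rfl]
    cases s <;> simp
  have hmemy : Ay (!t) ∈ (gameOf W Fix x y Ax Ay).act y := by
    simp only [gameOf, if_neg (Ne.symm hxy), if_pos rfl]
    cases t <;> simp
  rcases hcyc s t with h | h
  · have hle := hstab x (Ax (!s)) hmemx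
    rw [hdevx, hux] at hle
    linarith
  · have hle := hstab y (Ay (!t)) hmemy
    rw [hdevy, huy] at hle
    linarith


lemma mp (W : Finset N → ℝ) (f : N → Finset N → ℝ) (hPNE : GuaranteesPNE1 W f)
    {S : Finset N} {m j : N} (hm : m ∈ S) (hj : j ∈ S) (hmj : m ≠ j)
    (h0 : f j (S.erase m) = 0) :
    (0 < f j S → f m (S.erase j) ≤ f m S) ∧ (f j S < 0 → f m S ≤ f m (S.erase j)) := by
  have e1 : ((((S.erase m).erase j) ∪ {m}) ∪ {j}) = S := erase2_union₁ hm hj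
  have e2 : (((S.erase m).erase j) ∪ {m}) = S.erase j := erase2_union₂ hm hmj
  have e3 : (((S.erase m).erase j) ∪ {j}) = S.erase m := erase2_union₃ hj hmj
  have hFm : ∀ r : Fin 2, m ∉ ((fun _ => (S.erase m).erase j) r : Finset N) := by
    intro r hr
    exact Finset.notMem_erase m S (Finset.mem_of_mem_erase hr)
  have hFj : ∀ r : Fin 2, j ∉ ((fun _ => (S.erase m).erase j) r : Finset N) :=
    fun r => Finset.notMem_erase j _
  constructor
  · intro hpos
    by_contra hcon
    push_neg at hcon
    refine master W f hPNE (n := 2) (fun _ => (S.erase m).erase j) m j hmj hFm hFj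
      (fun s => {cond s 1 0}) (fun t => {cond t 1 0}) ?_
    intro s t
    cases s <;> cases t <;>
      simp only [Bool.not_false, Bool.not_true, cond_true, cond_false,
        Finset.sum_singleton, occ] <;>
      simp only [Finset.mem_singleton, eq_false (by decide : ¬((1:Fin 2) = 0)),
        eq_false (by decide : ¬((0:Fin 2) = 1)), if_true, if_false, reduceIte,
        Finset.union_empty] <;>
      [skip; skip; skip; skip]
    · exact Or.inl (by rw [e1, e2]; exact hcon)
    · exact Or.inr (by rw [e1, e3, h0]; exact hpos)
    · exact Or.inr (by rw [e1, e3, h0]; exact hpos)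
    · exact Or.inl (by rw [e1, e2]; exact hcon)
  · intro hneg
    by_contra hcon
    push_neg at hcon
    refine master W f hPNE (n := 2) (fun _ => (S.erase m).erase j) m j hmj hFm hFj
      (fun s => {cond s 1 0}) (fun t => {cond t 1 0}) ?_
    intro s t
    cases s <;> cases t <;>
      simp only [Bool.not_false, Bool.not_true, cond_true, cond_false,
        Finset.sum_singleton, occ] <;>
      simp only [Finset.mem_singleton, eq_false (by decide : ¬((1:Fin 2) = 0)),
        eq_false (by decide : ¬((0:Fin 2) = 1)), if_true, if_false, reduceIte,
        Finset.union_empty] <;>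
      [skip; skip; skip; skip]
    · exact Or.inr (by rw [e1, e3, h0]; exact hneg)
    · exact Or.inl (by rw [e1, e2]; exact hcon)
    · exact Or.inl (by rw [e1, e2]; exact hcon)
    · exact Or.inr (by rw [e1, e3, h0]; exact hneg)


lemma quad (W : Finset N → ℝ) (f : N → Finset N → ℝ) (hPNE : GuaranteesPNE1 W f)
    {S T : Finset N} (hsub : T ⊆ S) {i1 i2 : N} (h1 : i1 ∈ T) (h2 : i2 ∈ T)
    (hne : i1 ≠ i2) (ha : f i1 (S.erase i2) = f i1 (T.erase i2))
    (hb : f i2 (S.erase i1) = f i2 (T.erase i1))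
    (hp : f i1 T < f i1 S) (hq : f i2 S < f i2 T) : False := by
  have h1S : i1 ∈ S := hsub h1
  have h2S : i2 ∈ S := hsub h2
  set L : Finset N := (T.erase i1).erase i2 with hL
  set H : Finset N := (S.erase i1).erase i2 with hH
  have eT1 : ((L ∪ {i1}) ∪ {i2}) = T := erase2_union₁ h1 h2
  have eT2 : (L ∪ {i1}) = T.erase i2 := erase2_union₂ h1 hne
  have eT3 : (L ∪ {i2}) = T.erase i1 := erase2_union₃ h2 hne
  have eS1 : ((H ∪ {i1}) ∪ {i2}) = S := erase2_union₁ h1S h2S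
  have eS2 : (H ∪ {i1}) = S.erase i2 := erase2_union₂ h1S hne
  have eS3 : (H ∪ {i2}) = S.erase i1 := erase2_union₃ h2S hne
  have hF1 : ∀ r : Fin 4, i1 ∉ ((fun r => if r = 0 ∨ r = 2 then L else H) r : Finset N) := by
    intro r
    dsimp only
    split_ifs
    · exact fun hr => Finset.notMem_erase i1 T (Finset.mem_of_mem_erase hr)
    · exact fun hr => Finset.notMem_erase i1 S (Finset.mem_of_mem_erase hr)
  have hF2 : ∀ r : Fin 4, i2 ∉ ((fun r => if r = 0 ∨ r = 2 then L else H) r : Finset N) := by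
    intro r
    dsimp only
    split_ifs
    · exact Finset.notMem_erase i2 _
    · exact Finset.notMem_erase i2 _
  refine master W f hPNE (n := 4) (fun r => if r = 0 ∨ r = 2 then L else H) i1 i2 hne hF1 hF2
    (fun s => cond s {1, 2} {0, 3}) (fun t => cond t {2, 3} {0, 1}) ?_
  intro s t
  cases s <;> cases t <;>
    simp only [Bool.not_false, Bool.not_true, cond_true, cond_false, occ] <;>
    rw [Finset.sum_pair (by decide : (1 : Fin 4) ≠ 2),
      Finset.sum_pair (by decide : (0 : Fin 4) ≠ 3),
      Finset.sum_pair (by decide : (2 : Fin 4) ≠ 3),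
      Finset.sum_pair (by decide : (0 : Fin 4) ≠ 1)] <;>
    simp (config := { decide := true }) only [Finset.mem_insert, Finset.mem_singleton,
      if_true, if_false, Finset.union_empty] <;>
    [skip; skip; skip; skip]
  · exact Or.inl (by rw [eT1, eS1, eS2, eT2, ha]; linarith)
  · exact Or.inr (by rw [eS1, eT1, eT3, eS3, hb]; linarith)
  · exact Or.inr (by rw [eS1, eT1, eT3, eS3, hb]; linarith)
  · exact Or.inl (by rw [eS1, eT1, eT2, eS2, ha]; linarith)


lemma aux (W : Finset N → ℝ) (f : N → Finset N → ℝ)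
    (hbb : BudgetBalanced W f) (hPNE : GuaranteesPNE1 W f) :
    ∀ S : Finset N,
      (∀ j ∈ S, j ∉ contributors W S → f j S = 0) ∧
      (∀ i ∈ contributors W S, f i S = f i (contributors W S)) := by
  intro S
  induction S using Finset.strongInduction with
  | _ S IH =>
  have hsub : contributors W S ⊆ S := contributors_subset W S
  have hTc : ∀ T ∈ supp W, T ⊆ S → T ⊆ contributors W S :=
    fun T hT hTS => subset_contributors hT hTS
  -- generic suppIn congruence within S
  have hgen : ∀ X Y : Finset N, Y ⊆ X → (∀ T ∈ supp W, T ⊆ X → T ⊆ Y) →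
      suppIn W X = suppIn W Y := by
    intro X Y hYX h
    ext T
    simp only [suppIn, Finset.mem_filter]
    exact ⟨fun hh => ⟨hh.1, h T hh.1 hh.2⟩, fun hh => ⟨hh.1, hh.2.trans hYX⟩⟩
  have hWeq : ∀ X Y : Finset N, suppIn W X = suppIn W Y → W X = W Y := by
    intro X Y h
    rw [← sum_coeff_suppIn W X, ← sum_coeff_suppIn W Y, h]
  -- dummy part
  have dummy : ∀ j ∈ S, j ∉ contributors W S → f j S = 0 := by
    intro j hj hjc
    have hWej : W (S.erase j) = W S := by
      refine (hWeq _ _ (hgen S (S.erase j) (Finset.erase_subset j S) ?_)).symm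
      intro T hT hTS
      exact Finset.subset_erase.2 ⟨hTS, fun hjT => hjc (hTc T hT hTS hjT)⟩
    have hkey : ∑ m ∈ S.erase j, (f m (S.erase j) - f m S) = f j S := by
      rw [Finset.sum_sub_distrib, hbb (S.erase j), hWej, ← hbb S]
      have h2 : ∑ m ∈ S.erase j, f m S + f j S = ∑ m ∈ S, f m S :=
        Finset.sum_erase_add S _ hj
      linarith
    have hzero : ∀ m ∈ S.erase j, f j (S.erase m) = 0 := by
      intro m hm
      have hmS : m ∈ S := Finset.mem_of_mem_erase hm
      have hmj : m ≠ j := (Finset.mem_erase.1 hm).1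
      have hss : S.erase m ⊂ S := Finset.erase_ssubset hmS
      refine (IH _ hss).1 j (Finset.mem_erase.2 ⟨Ne.symm hmj, hj⟩) ?_
      intro hcon
      obtain ⟨T, hT, hTS, hjT⟩ := mem_contributors.1 hcon
      exact hjc (hTc T hT (hTS.trans (Finset.erase_subset m S)) hjT)
    rcases lt_trichotomy (f j S) 0 with hneg | h0 | hpos
    · have hge : ∀ m ∈ S.erase j, 0 ≤ f m (S.erase j) - f m S := by
        intro m hm
        have := (mp W f hPNE (Finset.mem_of_mem_erase hm) hj
          (Finset.mem_erase.1 hm).1 (hzero m hm)).2 hneg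
        linarith
      have := Finset.sum_nonneg hge
      linarith [hkey]
    · exact h0
    · have hle : ∀ m ∈ S.erase j, f m (S.erase j) - f m S ≤ 0 := by
        intro m hm
        have := (mp W f hPNE (Finset.mem_of_mem_erase hm) hj
          (Finset.mem_erase.1 hm).1 (hzero m hm)).1 hpos
        linarith
      have := Finset.sum_nonpos hle
      linarith [hkey]
  refine ⟨dummy, ?_⟩
  -- contributor part
  have hWS : W S = W (contributors W S) := by
    apply hWeq
    exact hgen S (contributors W S) hsub hTc
  have hsum0 : ∑ i ∈ contributors W S, (f i S - f i (contributors W S)) = 0 := by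
    rw [Finset.sum_sub_distrib, hbb (contributors W S)]
    have h1 : ∑ i ∈ contributors W S, f i S = ∑ i ∈ S, f i S :=
      Finset.sum_subset hsub (fun x hx hnx => dummy x hx hnx)
    rw [h1, hbb S, hWS]
    ring
  have htrans : ∀ i1 i2 : N, i1 ∈ contributors W S → i2 ∈ contributors W S → i1 ≠ i2 →
      f i1 (S.erase i2) = f i1 ((contributors W S).erase i2) := by
    intro i1 i2 h1 h2 hne
    have hss1 : S.erase i2 ⊂ S := Finset.erase_ssubset (hsub h2)
    have hss2 : (contributors W S).erase i2 ⊂ S :=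
      Finset.ssubset_of_subset_of_ssubset (Finset.erase_subset_erase i2 hsub) hss1
    have hsupp : suppIn W (S.erase i2) = suppIn W ((contributors W S).erase i2) := by
      apply hgen (S.erase i2) ((contributors W S).erase i2)
        (Finset.erase_subset_erase i2 hsub)
      intro T hT hTS
      have hTS' : T ⊆ S := hTS.trans (Finset.erase_subset i2 S)
      have h1' := hTc T hT hTS'
      exact Finset.subset_erase.2 ⟨h1', fun hcon => (Finset.subset_erase.1 hTS).2 hcon⟩
    have hCeq : contributors W (S.erase i2) = contributors W ((contributors W S).erase i2) := by
      show (suppIn W (S.erase i2)).biUnion id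
        = (suppIn W ((contributors W S).erase i2)).biUnion id
      rw [hsupp]
    by_cases hmem : i1 ∈ contributors W (S.erase i2)
    · rw [(IH _ hss1).2 i1 hmem]
      have hmem' : i1 ∈ contributors W ((contributors W S).erase i2) := hCeq ▸ hmem
      rw [(IH _ hss2).2 i1 hmem', hCeq]
    · rw [(IH _ hss1).1 i1 (Finset.mem_erase.2 ⟨hne, hsub h1⟩) hmem]
      have hmem' : i1 ∉ contributors W ((contributors W S).erase i2) := by
        rw [← hCeq]; exact hmem
      rw [(IH _ hss2).1 i1 (Finset.mem_erase.2 ⟨hne, h1⟩) hmem']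
  intro i hi
  by_contra hne0
  have hd : f i S - f i (contributors W S) ≠ 0 := sub_ne_zero.2 hne0
  rcases hd.lt_or_gt with hlt | hgt
  · -- f i S < f i Ŝ : find positive partner
    have hex : ∃ i1 ∈ contributors W S, 0 < f i1 S - f i1 (contributors W S) := by
      by_contra hc
      push_neg at hc
      have hsplit : ∑ m ∈ (contributors W S).erase i, (f m S - f m (contributors W S))
          + (f i S - f i (contributors W S))
          = ∑ m ∈ contributors W S, (f m S - f m (contributors W S)) :=
        Finset.sum_erase_add _ _ hi
      have hnp : ∑ m ∈ (contributors W S).erase i, (f m S - f m (contributors W S)) ≤ 0 :=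
        Finset.sum_nonpos fun m hm => hc m (Finset.mem_of_mem_erase hm)
      rw [hsum0] at hsplit
      linarith
    obtain ⟨i1, hi1, hpos⟩ := hex
    have hne12 : i1 ≠ i := by
      rintro rfl
      linarith
    exact (quad W f hPNE hsub hi1 hi hne12
      (htrans i1 i hi1 hi hne12) (htrans i i1 hi hi1 (Ne.symm hne12))
      (by linarith) (by linarith)).elim
  · -- f i S > f i Ŝ : find negative partner
    have hex : ∃ i2 ∈ contributors W S, f i2 S - f i2 (contributors W S) < 0 := by
      by_contra hc
      push_neg at hc
      have hsplit : ∑ m ∈ (contributors W S).erase i, (f m S - f m (contributors W S))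
          + (f i S - f i (contributors W S))
          = ∑ m ∈ contributors W S, (f m S - f m (contributors W S)) :=
        Finset.sum_erase_add _ _ hi
      have hnn : 0 ≤ ∑ m ∈ (contributors W S).erase i, (f m S - f m (contributors W S)) :=
        Finset.sum_nonneg fun m hm => hc m (Finset.mem_of_mem_erase hm)
      rw [hsum0] at hsplit
      linarith
    obtain ⟨i2, hi2, hneg⟩ := hex
    have hne12 : i ≠ i2 := by
      rintro rfl
      linarith
    exact (quad W f hPNE hsub hi hi2 hne12
      (htrans i i2 hi hi2 hne12) (htrans i2 i hi2 hi (Ne.symm hne12))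
      (by linarith) (by linarith)).elim

/-- **Lemma 3.** A budget-balanced distribution rule `f` for `W` that guarantees
a pure Nash equilibrium in all games in `G(N, f, W)` distributes the welfare
among the contributing players as if all other players were absent:
`f(i,S) = f(i, N^W(S))` for all `i ∈ N^W(S)`. -/
theorem contributors_shares_unchanged (N : Type) [Fintype N] [DecidableEq N]
    (hN : 1 < Fintype.card N)
    (W : Finset N → ℝ) (f : N → Finset N → ℝ)
    (hW0 : W ∅ = 0) (hdist : DistRule f) (hbb : BudgetBalanced W f)
    (hPNE : GuaranteesPNE1 W f) :
    ∀ S : Finset N, ∀ i ∈ contributors W S, f i S = f i (contributors W S) := by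
  intro S i hi
  exact (aux W f hbb hPNE S).2 i hi

end CostSharing
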